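/- arXiv:2507.05449 — 2 statements merged into one kernel-verified Lean document; each statement's English description precedes it below -/
import Mathlib

section
/- Let $(A,B)$ and $(A',B')$ be two partitions of $[m+n]$ into disjoint nonempty sets (so $A \cup B = A' \cup B' = [m+n]$), with $(A,B) \neq (A',B')$. Then the cone $C(A,B) \cap C(A',B') = C(A \cap A', B \cap B')$ spans a linear subspace of dimension strictly less than $m+n-1$. -/
open NNReal

/-- The standard basis vector `e i` of `ℝ^N`. -/
noncomputable def stdBasis {N : ℕ} (i : Fin N) : Fin N → ℝ := Pi.single i 1

/-- The partition cone `C(A,B) = cone {e i - e j : i ∈ A, j ∈ B}`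
(equal to `{0}` when `A` or `B` is empty). -/
noncomputable def partitionCone {N : ℕ} (A B : Finset (Fin N)) : Set (Fin N → ℝ) :=
  (Submodule.span ℝ≥0 {x | ∃ i ∈ A, ∃ j ∈ B, x = stdBasis i - stdBasis j} : Set (Fin N → ℝ))

/-- The sign-condition set as an `ℝ≥0`-submodule. -/
def signSubmodule {N : ℕ} (A B : Finset (Fin N)) : Submodule ℝ≥0 (Fin N → ℝ) where
  carrier := {x | (∑ i, x i = 0) ∧ (∀ i ∈ A, 0 ≤ x i) ∧ (∀ j ∈ B, x j ≤ 0)}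
  zero_mem' := by simp
  add_mem' := by
    rintro x y ⟨hx1, hx2, hx3⟩ ⟨hy1, hy2, hy3⟩
    refine ⟨by simp [Finset.sum_add_distrib, hx1, hy1], fun i hi => ?_, fun j hj => ?_⟩
    · exact add_nonneg (hx2 i hi) (hy2 i hi)
    · exact add_nonpos (hx3 j hj) (hy3 j hj)
  smul_mem' := by
    rintro c x ⟨hx1, hx2, hx3⟩
    rw [NNReal.smul_def]
    refine ⟨by simp [← Finset.mul_sum, hx1], fun i hi => ?_, fun j hj => ?_⟩
    · exact mul_nonneg c.coe_nonneg (hx2 i hi)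
    · exact mul_nonpos_of_nonneg_of_nonpos c.coe_nonneg (hx3 j hj)

lemma cone_subset_signs {N : ℕ} (A B : Finset (Fin N)) (hAB : Disjoint A B) :
    partitionCone A B ⊆ (signSubmodule A B : Set (Fin N → ℝ)) := by
  have : Submodule.span ℝ≥0 {x : Fin N → ℝ | ∃ i ∈ A, ∃ j ∈ B, x = stdBasis i - stdBasis j}
      ≤ signSubmodule A B := by
    rw [Submodule.span_le]
    rintro y ⟨i, hi, j, hj, rfl⟩
    have hij : i ≠ j := fun e => (Finset.disjoint_left.mp hAB hi) (e ▸ hj)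
    refine ⟨?_, fun l hl => ?_, fun l hl => ?_⟩
    · simp [stdBasis, Finset.sum_sub_distrib, Finset.sum_pi_single']
    · have hlj : l ≠ j := fun e => (Finset.disjoint_left.mp hAB hl) (e ▸ hj)
      simp only [stdBasis, Pi.sub_apply, Pi.single_eq_of_ne hlj, sub_zero]
      rcases eq_or_ne l i with rfl | hli
      · simp
      · simp [Pi.single_eq_of_ne hli]
    · have hli : l ≠ i := fun e => (Finset.disjoint_right.mp hAB hl) (e ▸ hi)
      simp only [stdBasis, Pi.sub_apply, Pi.single_eq_of_ne hli, zero_sub, neg_nonpos]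
      rcases eq_or_ne l j with rfl | hlj
      · simp
      · simp [Pi.single_eq_of_ne hlj]
  exact this

lemma mem_cone_of_signs {N : ℕ} (A B : Finset (Fin N)) (hAB : Disjoint A B) :
    ∀ (n : ℕ) (x : Fin N → ℝ),
      (Finset.univ.filter fun i => x i ≠ 0).card ≤ n →
      (∑ i, x i = 0) → (∀ i ∈ A, 0 ≤ x i) → (∀ j ∈ B, x j ≤ 0) →
      (∀ i, i ∉ A → i ∉ B → x i = 0) →
      x ∈ partitionCone A B := by
  intro n
  induction n with
  | zero =>
      intro x hcard hsum hA hB hZ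
      have hx : x = 0 := by
        funext l
        simp only [Pi.zero_apply]
        by_contra hl
        have hmem : l ∈ Finset.univ.filter fun i => x i ≠ 0 := by simp [hl]
        have := Finset.card_pos.mpr ⟨l, hmem⟩
        omega
      rw [hx]
      exact (Submodule.span ℝ≥0 _).zero_mem
  | succ n ih =>
      intro x hcard hsum hA hB hZ
      by_cases hx : x = 0
      · rw [hx]; exact (Submodule.span ℝ≥0 _).zero_mem
      have hpos : ∃ i, 0 < x i := by
        by_contra h
        push_neg at h
        have := (Finset.sum_eq_zero_iff_of_nonpos (fun i _ => h i)).mp hsum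
        exact hx (funext fun l => this l (Finset.mem_univ l))
      have hneg : ∃ j, x j < 0 := by
        by_contra h
        push_neg at h
        have := (Finset.sum_eq_zero_iff_of_nonneg (fun i _ => h i)).mp hsum
        exact hx (funext fun l => this l (Finset.mem_univ l))
      obtain ⟨i, hi⟩ := hpos
      obtain ⟨j, hj⟩ := hneg
      have hiA : i ∈ A := by
        by_contra hiA
        by_cases hiB : i ∈ B
        · exact absurd (hB i hiB) (not_le.mpr hi)
        · exact absurd (hZ i hiA hiB) (ne_of_gt hi)
      have hjB : j ∈ B := by
        by_contra hjB
        by_cases hjA : j ∈ A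
        · exact absurd (hA j hjA) (not_le.mpr hj)
        · exact absurd (hZ j hjA hjB) (ne_of_lt hj)
      have hij : i ≠ j := by rintro rfl; linarith
      set t : ℝ := min (x i) (-(x j)) with ht
      have ht0 : 0 < t := lt_min hi (by linarith)
      set g : Fin N → ℝ := stdBasis i - stdBasis j with hg
      set x' : Fin N → ℝ := x - t • g with hx'
      have hgi : g i = 1 := by
        simp [hg, stdBasis, Pi.single_eq_same, Pi.single_eq_of_ne hij,
          Pi.single_eq_of_ne (Ne.symm hij)]
      have hgj : g j = -1 := by
        simp [hg, stdBasis, Pi.single_eq_same, Pi.single_eq_of_ne hij,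
          Pi.single_eq_of_ne (Ne.symm hij)]
      have hgl : ∀ l, l ≠ i → l ≠ j → g l = 0 := by
        intro l h1 h2
        simp [hg, stdBasis, Pi.single_eq_of_ne h1, Pi.single_eq_of_ne h2]
      have hx'i : x' i = x i - t := by simp [hx', hgi]
      have hx'j : x' j = x j + t := by simp [hx', hgj]
      have hx'l : ∀ l, l ≠ i → l ≠ j → x' l = x l := by
        intro l h1 h2; simp [hx', hgl l h1 h2]
      have hsumg : ∑ l, g l = 0 := by
        simp [hg, stdBasis, Finset.sum_sub_distrib, Finset.sum_pi_single']
      have hsum' : ∑ l, x' l = 0 := by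
        simp [hx', Finset.sum_sub_distrib, ← Finset.mul_sum, hsumg, hsum]
      have hA2 : ∀ l ∈ A, 0 ≤ x' l := by
        intro l hl
        rcases eq_or_ne l i with rfl | h1
        · rw [hx'i]; have := min_le_left (x l) (-(x j)); linarith
        rcases eq_or_ne l j with rfl | h2
        · exact absurd hjB (Finset.disjoint_left.mp hAB hl)
        · rw [hx'l l h1 h2]; exact hA l hl
      have hB2 : ∀ l ∈ B, x' l ≤ 0 := by
        intro l hl
        rcases eq_or_ne l j with rfl | h2
        · rw [hx'j]; have := min_le_right (x i) (-(x l)); linarith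
        rcases eq_or_ne l i with rfl | h1
        · exact absurd hl (Finset.disjoint_left.mp hAB hiA)
        · rw [hx'l l h1 h2]; exact hB l hl
      have hZ2 : ∀ l, l ∉ A → l ∉ B → x' l = 0 := by
        intro l h1 h2
        rw [hx'l l (fun e => h1 (e ▸ hiA)) (fun e => h2 (e ▸ hjB))]
        exact hZ l h1 h2
      have hsub : (Finset.univ.filter fun l => x' l ≠ 0) ⊆
          (Finset.univ.filter fun l => x l ≠ 0) := by
        intro l hl
        simp only [Finset.mem_filter, Finset.mem_univ, true_and] at hl ⊢
        rcases eq_or_ne l i with rfl | h1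
        · exact ne_of_gt hi
        rcases eq_or_ne l j with rfl | h2
        · exact ne_of_lt hj
        · rwa [hx'l l h1 h2] at hl
      have hstrict : (Finset.univ.filter fun l => x' l ≠ 0).card <
          (Finset.univ.filter fun l => x l ≠ 0).card := by
        rcases le_total (x i) (-(x j)) with hc | hc
        · apply Finset.card_lt_card
          refine ⟨hsub, fun hss => ?_⟩
          have hmem : i ∈ Finset.univ.filter fun l => x l ≠ 0 := by
            simp [ne_of_gt hi]
          have := hss hmem
          simp only [Finset.mem_filter, Finset.mem_univ, true_and] at this
          apply this
          rw [hx'i, ht, min_eq_left hc]; ring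
        · apply Finset.card_lt_card
          refine ⟨hsub, fun hss => ?_⟩
          have hmem : j ∈ Finset.univ.filter fun l => x l ≠ 0 := by
            simp [ne_of_lt hj]
          have := hss hmem
          simp only [Finset.mem_filter, Finset.mem_univ, true_and] at this
          apply this
          rw [hx'j, ht, min_eq_right hc]; ring
      have hx'mem : x' ∈ partitionCone A B :=
        ih x' (by omega) hsum' hA2 hB2 hZ2
      have hgmem : g ∈ partitionCone A B :=
        Submodule.subset_span ⟨i, hiA, j, hjB, rfl⟩
      have htg : t • g ∈ (Submodule.span ℝ≥0
          {y : Fin N → ℝ | ∃ i ∈ A, ∃ j ∈ B, y = stdBasis i - stdBasis j} :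
            Set (Fin N → ℝ)) := by
        have := Submodule.smul_mem (Submodule.span ℝ≥0
          {y : Fin N → ℝ | ∃ i ∈ A, ∃ j ∈ B, y = stdBasis i - stdBasis j})
          (⟨t, le_of_lt ht0⟩ : ℝ≥0) hgmem
        exact this
      have hxeq : x = x' + t • g := by rw [hx']; abel
      rw [hxeq]
      exact Submodule.add_mem _ hx'mem htg

theorem intersection_of_two_partition_cones_lower_dim {N : ℕ}
    (A B A' B' : Finset (Fin N))
    (hAB : Disjoint A B) (hA'B' : Disjoint A' B')
    (hA : A.Nonempty) (hB : B.Nonempty) (hA' : A'.Nonempty) (hB' : B'.Nonempty)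
    (hcov : A ∪ B = Finset.univ) (hcov' : A' ∪ B' = Finset.univ)
    (hne : (A, B) ≠ (A', B')) :
    partitionCone A B ∩ partitionCone A' B' = partitionCone (A ∩ A') (B ∩ B') ∧
    Module.finrank ℝ
      (Submodule.span ℝ (partitionCone A B ∩ partitionCone A' B')) < N - 1 := by
  have hABd : Disjoint (A ∩ A') (B ∩ B') :=
    hAB.mono Finset.inter_subset_left Finset.inter_subset_left
  -- characterization of members of the intersection
  have hmem : ∀ x ∈ partitionCone A B ∩ partitionCone A' B',
      (∑ i, x i = 0) ∧ (∀ i ∈ A ∩ A', 0 ≤ x i) ∧ (∀ j ∈ B ∩ B', x j ≤ 0) ∧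
      (∀ i, i ∉ A ∩ A' → i ∉ B ∩ B' → x i = 0) := by
    rintro x ⟨h1, h2⟩
    obtain ⟨hs, hA1, hB1⟩ := cone_subset_signs A B hAB h1
    obtain ⟨-, hA2, hB2⟩ := cone_subset_signs A' B' hA'B' h2
    refine ⟨hs, fun i hi => hA1 i (Finset.mem_inter.mp hi).1,
      fun j hj => hB1 j (Finset.mem_inter.mp hj).1, ?_⟩
    intro i hi1 hi2
    have hiu : i ∈ A ∪ B := by rw [hcov]; exact Finset.mem_univ i
    have hiu' : i ∈ A' ∪ B' := by rw [hcov']; exact Finset.mem_univ i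
    rcases Finset.mem_union.mp hiu with hiA | hiB
    · rcases Finset.mem_union.mp hiu' with hiA' | hiB'
      · exact absurd (Finset.mem_inter.mpr ⟨hiA, hiA'⟩) hi1
      · exact le_antisymm (hB2 i hiB') (hA1 i hiA)
    · rcases Finset.mem_union.mp hiu' with hiA' | hiB'
      · exact le_antisymm (hB1 i hiB) (hA2 i hiA')
      · exact absurd (Finset.mem_inter.mpr ⟨hiB, hiB'⟩) hi2
  have heq : partitionCone A B ∩ partitionCone A' B' = partitionCone (A ∩ A') (B ∩ B') := by
    apply Set.Subset.antisymm
    · intro x hx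
      obtain ⟨hs, h1, h2, h3⟩ := hmem x hx
      exact mem_cone_of_signs (A ∩ A') (B ∩ B') hABd
        (Finset.univ.filter fun i => x i ≠ 0).card x le_rfl hs h1 h2 h3
    · intro x hx
      constructor
      · refine Submodule.span_mono ?_ hx
        rintro y ⟨i, hi, j, hj, rfl⟩
        exact ⟨i, (Finset.mem_inter.mp hi).1, j, (Finset.mem_inter.mp hj).1, rfl⟩
      · refine Submodule.span_mono ?_ hx
        rintro y ⟨i, hi, j, hj, rfl⟩
        exact ⟨i, (Finset.mem_inter.mp hi).2, j, (Finset.mem_inter.mp hj).2, rfl⟩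
  refine ⟨heq, ?_⟩
  -- find a coordinate that vanishes on the intersection
  have hAA' : A ≠ A' := by
    intro h
    apply hne
    have hBB' : B = B' := by
      ext l
      constructor
      · intro hl
        have hlA : l ∉ A := Finset.disjoint_right.mp hAB hl
        have : l ∈ A' ∪ B' := by rw [hcov']; exact Finset.mem_univ l
        rcases Finset.mem_union.mp this with h' | h'
        · exact absurd (h ▸ h') hlA
        · exact h'
      · intro hl
        have hlA' : l ∉ A' := Finset.disjoint_right.mp hA'B' hl
        have : l ∈ A ∪ B := by rw [hcov]; exact Finset.mem_univ l
        rcases Finset.mem_union.mp this with h' | h'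
        · exact absurd (h ▸ h') hlA'
        · exact h'
    rw [h, hBB']
  obtain ⟨k, hk⟩ : ∃ k, (k ∈ A ∧ k ∈ B') ∨ (k ∈ B ∧ k ∈ A') := by
    by_contra hcon
    push_neg at hcon
    apply hAA'
    ext l
    constructor
    · intro hl
      have : l ∉ B' := (hcon l).1 hl
      have hlu : l ∈ A' ∪ B' := by rw [hcov']; exact Finset.mem_univ l
      rcases Finset.mem_union.mp hlu with h' | h'
      · exact h'
      · exact absurd h' this
    · intro hl
      by_contra hlA
      have hlB : l ∈ B := by
        have : l ∈ A ∪ B := by rw [hcov]; exact Finset.mem_univ l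
        rcases Finset.mem_union.mp this with h' | h'
        · exact absurd h' hlA
        · exact h'
      exact (hcon l).2 hlB hl
  have hk0 : ∀ x ∈ partitionCone A B ∩ partitionCone A' B', x k = 0 := by
    intro x hx
    obtain ⟨-, -, -, h3⟩ := hmem x hx
    rcases hk with ⟨h1, h2⟩ | ⟨h1, h2⟩
    · refine h3 k (fun hm => ?_) (fun hm => ?_)
      · exact Finset.disjoint_right.mp hA'B' h2 (Finset.mem_inter.mp hm).2
      · exact Finset.disjoint_left.mp hAB h1 (Finset.mem_inter.mp hm).1
    · refine h3 k (fun hm => ?_) (fun hm => ?_)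
      · exact Finset.disjoint_right.mp hAB h1 (Finset.mem_inter.mp hm).1
      · exact Finset.disjoint_left.mp hA'B' h2 (Finset.mem_inter.mp hm).2
  have hN : 2 ≤ N := by
    obtain ⟨a, ha⟩ := hA
    obtain ⟨b, hb⟩ := hB
    have hab : a ≠ b := fun e => (Finset.disjoint_left.mp hAB ha) (e ▸ hb)
    have : Nontrivial (Fin N) := ⟨a, b, hab⟩
    have := Fintype.one_lt_card_iff_nontrivial.mpr this
    simp at this; omega
  have : Nontrivial (Fin N) := Fin.nontrivial_iff_two_le.mpr hN
  -- the linear map x ↦ (∑ x, x k)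
  let f : (Fin N → ℝ) →ₗ[ℝ] ℝ × ℝ :=
    { toFun := fun x => (∑ i, x i, x k)
      map_add' := fun x y => by simp [Finset.sum_add_distrib]
      map_smul' := fun c x => by simp [Finset.mul_sum, Prod.smul_def] }
  have hker : Submodule.span ℝ (partitionCone A B ∩ partitionCone A' B') ≤
      LinearMap.ker f := by
    rw [Submodule.span_le]
    intro x hx
    simp only [SetLike.mem_coe, LinearMap.mem_ker, f, LinearMap.coe_mk, AddHom.coe_mk,
      Prod.mk_eq_zero]
    exact ⟨(hmem x hx).1, hk0 x hx⟩
  have hsurj : Function.Surjective f := by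
    rintro ⟨a, b⟩
    obtain ⟨l, hlk⟩ := exists_ne k
    set v : Fin N → ℝ := b • (Pi.single k 1 : Fin N → ℝ) + (a - b) • (Pi.single l 1 : Fin N → ℝ) with hv
    refine ⟨v, ?_⟩
    have h1 : ∑ i, v i = a := by
      simp [hv, Finset.sum_add_distrib, ← Finset.mul_sum, Finset.sum_pi_single']
    have h2 : v k = b := by
      simp [hv, Pi.single_eq_same, Pi.single_eq_of_ne (Ne.symm hlk)]
    simp only [f, LinearMap.coe_mk, AddHom.coe_mk, h1, h2]
  have hrange : LinearMap.range f = ⊤ := LinearMap.range_eq_top.mpr hsurj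
  have hrk := LinearMap.finrank_range_add_finrank_ker f
  rw [hrange, finrank_top] at hrk
  have hdom : Module.finrank ℝ (Fin N → ℝ) = N := by simp
  have hcod : Module.finrank ℝ (ℝ × ℝ) = 2 := by simp
  have hkerrk : Module.finrank ℝ (LinearMap.ker f) = N - 2 := by omega
  have hle := Submodule.finrank_mono hker
  omega
end

section
/- Let $m \geq 1$ and $N = m+n$, and consider the collection of cones $\mathcal{C}_m = \{C(A, [N] \setminus A) : \emptyset \neq A \subseteq [m]\}$. Then $\bigcup \mathcal{C}_m = L + C_0$, where $L = \mathrm{span}\{e_1 - e_i : i = 2,\dots,m\}$ and $C_0 = \mathrm{cone}\{\frac{1}{m}(e_1 + \cdots + e_m) - e_i : i = m+1,\dots,m+n\}$. -/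
open NNReal Pointwise

lemma stdBasis_apply {N : ℕ} (i k : Fin N) : stdBasis i k = if k = i then 1 else 0 :=
  Pi.single_apply i 1 k

lemma sum_stdBasis {N : ℕ} (i : Fin N) : ∑ k, stdBasis i k = 1 := by
  simp [stdBasis]

lemma filter_lt_card (m n : ℕ) :
    (Finset.univ.filter (fun i : Fin (m + n) => (i : ℕ) < m)).card = m := by
  have h : (Finset.univ.filter (fun i : Fin (m + n) => (i : ℕ) < m)) =
      Finset.map (Fin.castAddEmb n) Finset.univ := by
    ext k
    simp only [Finset.mem_filter, Finset.mem_univ, true_and, Finset.mem_map]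
    constructor
    · intro h
      exact ⟨⟨(k : ℕ), h⟩, by ext; simp [Fin.castAddEmb]⟩
    · rintro ⟨i, -, rfl⟩
      simp [Fin.castAddEmb, i.isLt]
  rw [h, Finset.card_map, Finset.card_univ, Fintype.card_fin]

lemma sum_stdBasis_F_apply (m n : ℕ) (k : Fin (m + n)) :
    (∑ i ∈ Finset.univ.filter (fun i : Fin (m + n) => (i : ℕ) < m), stdBasis i) k
      = if (k : ℕ) < m then 1 else 0 := by
  rw [Finset.sum_apply]
  simp only [stdBasis_apply]
  rw [Finset.sum_ite_eq]
  simp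

/-- The ℝ≥0-submodule of vectors with total sum 0 and nonpositive tail coordinates. -/
def coneBound (m n : ℕ) : Submodule ℝ≥0 (Fin (m + n) → ℝ) where
  carrier := {x | ∑ k, x k = 0 ∧ ∀ j : Fin (m + n), m ≤ (j : ℕ) → x j ≤ 0}
  add_mem' := by
    rintro x y ⟨hx1, hx2⟩ ⟨hy1, hy2⟩
    refine ⟨by simp [Finset.sum_add_distrib, hx1, hy1], fun j hj => ?_⟩
    exact add_nonpos (hx2 j hj) (hy2 j hj)
  zero_mem' := ⟨by simp, by simp⟩
  smul_mem' := by
    rintro c x ⟨hx1, hx2⟩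
    refine ⟨?_, fun j hj => ?_⟩
    · simp only [Pi.smul_apply, NNReal.smul_def, smul_eq_mul, ← Finset.mul_sum, hx1, mul_zero]
    · simpa [NNReal.smul_def] using
        mul_nonpos_of_nonneg_of_nonpos c.coe_nonneg (hx2 j hj)

lemma mem_coneBound {m n : ℕ} (x : Fin (m + n) → ℝ) :
    x ∈ coneBound m n ↔ ∑ k, x k = 0 ∧ ∀ j : Fin (m + n), m ≤ (j : ℕ) → x j ≤ 0 :=
  Iff.rfl

/-- The ℝ-submodule of vectors with total sum 0 supported on the first `m` coordinates. -/
def linBound (m n : ℕ) : Submodule ℝ (Fin (m + n) → ℝ) where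
  carrier := {x | ∑ k, x k = 0 ∧ ∀ j : Fin (m + n), m ≤ (j : ℕ) → x j = 0}
  add_mem' := by
    rintro x y ⟨hx1, hx2⟩ ⟨hy1, hy2⟩
    exact ⟨by simp [Finset.sum_add_distrib, hx1, hy1],
      fun j hj => by simp [hx2 j hj, hy2 j hj]⟩
  zero_mem' := ⟨by simp, by simp⟩
  smul_mem' := by
    rintro c x ⟨hx1, hx2⟩
    exact ⟨by simp [smul_eq_mul, ← Finset.mul_sum, hx1], fun j hj => by simp [hx2 j hj]⟩

lemma cone_subset {m n : ℕ} (A : Finset (Fin (m + n)))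
    (hA : A ⊆ Finset.univ.filter (fun i : Fin (m + n) => (i : ℕ) < m)) :
    partitionCone A (Finset.univ \ A) ⊆ (coneBound m n : Set (Fin (m + n) → ℝ)) := by
  rw [partitionCone]
  refine Submodule.span_le.mpr ?_
  rintro x ⟨i, hi, j, hj, rfl⟩
  have him : (i : ℕ) < m := (Finset.mem_filter.mp (hA hi)).2
  refine ⟨?_, fun k hk => ?_⟩
  · simp [Finset.sum_sub_distrib, sum_stdBasis]
  · have h1 : stdBasis i k = 0 := by
      rw [stdBasis_apply, if_neg]
      intro h; subst h; omega
    have h2 : (0:ℝ) ≤ stdBasis j k := by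
      rw [stdBasis_apply]; positivity
    simp only [Pi.sub_apply, h1, zero_sub, neg_nonpos]
    exact h2

lemma sum_eq_sum_filter {m n : ℕ} (x : Fin (m + n) → ℝ)
    (ht : ∀ j : Fin (m + n), m ≤ (j : ℕ) → x j = 0) :
    ∑ i ∈ Finset.univ.filter (fun i : Fin (m + n) => (i : ℕ) < m), x i = ∑ k, x k :=
  Finset.sum_subset (Finset.subset_univ _)
    (fun k _ hk => ht k (by simpa using Finset.mem_filter.not.mp hk))

lemma mem_linSpan {m n : ℕ} (hm : 1 ≤ m) (x : Fin (m + n) → ℝ)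
    (h0 : ∑ k, x k = 0) (ht : ∀ j : Fin (m + n), m ≤ (j : ℕ) → x j = 0) :
    x ∈ Submodule.span ℝ {y : Fin (m + n) → ℝ | ∃ i : Fin (m + n),
      (i : ℕ) < m ∧ (i : ℕ) ≠ 0 ∧
      y = stdBasis (⟨0, Nat.lt_of_lt_of_le hm (Nat.le_add_right m n)⟩ : Fin (m + n)) - stdBasis i} := by
  set z : Fin (m + n) := ⟨0, Nat.lt_of_lt_of_le hm (Nat.le_add_right m n)⟩ with hz
  set F := Finset.univ.filter (fun i : Fin (m + n) => (i : ℕ) < m) with hF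
  have hsumF : ∑ i ∈ F, x i = 0 := by rw [hF, sum_eq_sum_filter x ht, h0]
  have key : x = ∑ i ∈ F, (-(x i)) • (stdBasis z - stdBasis i) := by
    funext k
    rw [Finset.sum_apply]
    simp only [Pi.smul_apply, Pi.sub_apply, stdBasis_apply, smul_eq_mul, mul_sub,
      mul_ite, mul_one, mul_zero]
    rw [Finset.sum_sub_distrib]
    have e1 : ∑ i ∈ F, (if k = z then -(x i) else 0) = 0 := by
      split_ifs with h
      · rw [Finset.sum_neg_distrib, hsumF, neg_zero]
      · simp
    have e2 : ∑ i ∈ F, (if k = i then -(x i) else 0) = -(x k) := by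
      rw [Finset.sum_ite_eq]
      split_ifs with h
      · rfl
      · have : x k = 0 := ht k (by simpa [hF] using Finset.mem_filter.not.mp h)
        simp [this]
    rw [e1, e2]
    ring
  rw [key]
  refine Submodule.sum_mem _ (fun i hi => Submodule.smul_mem _ _ ?_)
  by_cases hi0 : (i : ℕ) = 0
  · have : i = z := by apply Fin.ext; simp [hz, hi0]
    rw [this, sub_self]
    exact Submodule.zero_mem _
  · exact Submodule.subset_span ⟨i, (Finset.mem_filter.mp hi).2, hi0, rfl⟩

lemma coneBound_subset_sum {m n : ℕ} (hm : 1 ≤ m) :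
    (coneBound m n : Set (Fin (m + n) → ℝ)) ⊆
      (Submodule.span ℝ {x : Fin (m + n) → ℝ | ∃ i : Fin (m + n),
          (i : ℕ) < m ∧ (i : ℕ) ≠ 0 ∧
          x = stdBasis (⟨0, Nat.lt_of_lt_of_le hm (Nat.le_add_right m n)⟩ : Fin (m + n)) - stdBasis i} :
        Set (Fin (m + n) → ℝ)) +
      (Submodule.span ℝ≥0 {x : Fin (m + n) → ℝ | ∃ j : Fin (m + n), m ≤ (j : ℕ) ∧
          x = (m : ℝ)⁻¹ •
            (∑ i ∈ Finset.univ.filter (fun i : Fin (m + n) => (i : ℕ) < m), stdBasis i)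
            - stdBasis j} :
        Set (Fin (m + n) → ℝ)) := by
  rintro x ⟨h0, ht⟩
  set F := Finset.univ.filter (fun i : Fin (m + n) => (i : ℕ) < m) with hF
  set w : Fin (m + n) → ℝ :=
    ∑ j ∈ Finset.univ \ F, (-(x j)) • ((m : ℝ)⁻¹ • (∑ i ∈ F, stdBasis i) - stdBasis j)
    with hw
  have hmem_sdiff : ∀ j : Fin (m + n), j ∈ Finset.univ \ F ↔ m ≤ (j : ℕ) := by
    intro j
    simp only [Finset.mem_sdiff, Finset.mem_univ, true_and, hF, Finset.mem_filter]
    constructor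
    · intro h; omega
    · intro h h'; omega
  have hwk : ∀ k : Fin (m + n), w k = ∑ j ∈ Finset.univ \ F,
      (-(x j)) * ((m : ℝ)⁻¹ * (if (k : ℕ) < m then 1 else 0) - (if k = j then 1 else 0)) := by
    intro k
    rw [hw, Finset.sum_apply]
    simp only [Pi.smul_apply, Pi.sub_apply, smul_eq_mul, stdBasis_apply, hF,
      sum_stdBasis_F_apply]
  have hw_tail : ∀ k : Fin (m + n), m ≤ (k : ℕ) → w k = x k := by
    intro k hk
    rw [hwk]
    have step : ∀ j ∈ Finset.univ \ F,
        (-(x j)) * ((m : ℝ)⁻¹ * (if (k : ℕ) < m then 1 else 0) - (if k = j then 1 else 0))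
          = if k = j then x j else 0 := by
      intro j _
      rw [if_neg (by omega : ¬ (k : ℕ) < m)]
      split_ifs <;> ring
    rw [Finset.sum_congr rfl step, Finset.sum_ite_eq, if_pos ((hmem_sdiff k).mpr hk)]
  have hw_sum : ∑ k, w k = 0 := by
    have hterm : ∀ j ∈ Finset.univ \ F, ∑ k : Fin (m + n),
        (-(x j)) * ((m : ℝ)⁻¹ * (if (k : ℕ) < m then 1 else 0) - (if k = j then 1 else 0))
          = 0 := by
      intro j _
      rw [← Finset.mul_sum, Finset.sum_sub_distrib, ← Finset.mul_sum, Finset.sum_boole,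
        Finset.sum_ite_eq', if_pos (Finset.mem_univ j)]
      have hcard : ((Finset.univ.filter (fun k : Fin (m + n) => (k : ℕ) < m)).card : ℝ)
          = (m : ℝ) := by rw [filter_lt_card]
      rw [hcard, inv_mul_cancel₀ (by positivity : (m : ℝ) ≠ 0)]
      ring
    calc ∑ k, w k = ∑ k : Fin (m + n), ∑ j ∈ Finset.univ \ F,
          (-(x j)) * ((m : ℝ)⁻¹ * (if (k : ℕ) < m then 1 else 0) - (if k = j then 1 else 0)) :=
        Finset.sum_congr rfl (fun k _ => hwk k)
      _ = ∑ j ∈ Finset.univ \ F, ∑ k : Fin (m + n),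
          (-(x j)) * ((m : ℝ)⁻¹ * (if (k : ℕ) < m then 1 else 0) - (if k = j then 1 else 0)) :=
        Finset.sum_comm
      _ = 0 := by rw [Finset.sum_congr rfl hterm, Finset.sum_const, smul_zero]
  have hwC : w ∈ Submodule.span ℝ≥0 {x : Fin (m + n) → ℝ | ∃ j : Fin (m + n), m ≤ (j : ℕ) ∧
      x = (m : ℝ)⁻¹ •
        (∑ i ∈ Finset.univ.filter (fun i : Fin (m + n) => (i : ℕ) < m), stdBasis i)
        - stdBasis j} := by
    rw [hw]
    refine Submodule.sum_mem _ (fun j hj => ?_)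
    have hjm : m ≤ (j : ℕ) := (hmem_sdiff j).mp hj
    have hcoef : 0 ≤ -(x j) := by
      have := ht j hjm
      linarith
    have hgen := Submodule.subset_span (R := ℝ≥0)
      (s := {x : Fin (m + n) → ℝ | ∃ j : Fin (m + n), m ≤ (j : ℕ) ∧
        x = (m : ℝ)⁻¹ •
          (∑ i ∈ Finset.univ.filter (fun i : Fin (m + n) => (i : ℕ) < m), stdBasis i)
          - stdBasis j}) ⟨j, hjm, rfl⟩
    have := Submodule.smul_mem _ (⟨-(x j), hcoef⟩ : ℝ≥0) hgen
    exact this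
  have huL : x - w ∈ Submodule.span ℝ {y : Fin (m + n) → ℝ | ∃ i : Fin (m + n),
      (i : ℕ) < m ∧ (i : ℕ) ≠ 0 ∧
      y = stdBasis (⟨0, Nat.lt_of_lt_of_le hm (Nat.le_add_right m n)⟩ : Fin (m + n)) - stdBasis i} := by
    refine mem_linSpan hm _ ?_ ?_
    · simp only [Pi.sub_apply]
      rw [Finset.sum_sub_distrib, h0, hw_sum, sub_zero]
    · intro j hj
      simp only [Pi.sub_apply]
      rw [hw_tail j hj, sub_self]
  refine Set.mem_add.mpr ⟨x - w, huL, w, hwC, by abel⟩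

lemma coneBound_subset_union {m n : ℕ} (hm : 1 ≤ m) :
    (coneBound m n : Set (Fin (m + n) → ℝ)) ⊆
      ⋃ (A : Finset (Fin (m + n))) (_ : A.Nonempty)
        (_ : A ⊆ Finset.univ.filter (fun i : Fin (m + n) => (i : ℕ) < m)),
        partitionCone A (Finset.univ \ A) := by
  rintro x ⟨h0, ht⟩
  by_cases hpos : (Finset.univ.filter (fun i : Fin (m + n) => 0 < x i)).Nonempty
  · set A := Finset.univ.filter (fun i : Fin (m + n) => 0 < x i) with hA
    have hxA : ∀ i ∈ A, 0 < x i := fun i hi => (Finset.mem_filter.mp hi).2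
    have hxB : ∀ j ∈ Finset.univ \ A, x j ≤ 0 := by
      intro j hj
      have := (Finset.mem_sdiff.mp hj).2
      rw [hA, Finset.mem_filter] at this
      push_neg at this
      exact this (Finset.mem_univ j)
    have hAsub : A ⊆ Finset.univ.filter (fun i : Fin (m + n) => (i : ℕ) < m) := by
      intro i hi
      refine Finset.mem_filter.mpr ⟨Finset.mem_univ i, ?_⟩
      by_contra h
      exact absurd (ht i (by omega)) (not_le.mpr (hxA i hi))
    set S := ∑ i ∈ A, x i with hSdef
    have hS : 0 < S := Finset.sum_pos hxA hpos
    have hB : ∑ j ∈ Finset.univ \ A, x j = -S := by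
      have := Finset.sum_sdiff (Finset.subset_univ A) (f := x)
      rw [h0] at this
      linarith
    have key : x = ∑ i ∈ A, ∑ j ∈ Finset.univ \ A,
        ((x i * -(x j)) / S) • (stdBasis i - stdBasis j) := by
      funext k
      simp only [Finset.sum_apply, Pi.smul_apply, Pi.sub_apply, stdBasis_apply,
        smul_eq_mul, mul_sub, mul_ite, mul_one, mul_zero]
      rw [Finset.sum_congr rfl (fun i _ => Finset.sum_sub_distrib _ _), Finset.sum_sub_distrib]
      have hT1 : ∑ i ∈ A, ∑ j ∈ Finset.univ \ A,
          (if k = i then x i * -(x j) / S else 0)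
          = if k ∈ A then x k else 0 := by
        rw [Finset.sum_congr rfl (fun i _ => Finset.sum_ite_irrel _ _ _ _)]
        simp only [Finset.sum_const_zero]
        rw [Finset.sum_ite_eq]
        split_ifs with h
        · rw [← Finset.sum_div, ← Finset.mul_sum, Finset.sum_neg_distrib, hB, neg_neg,
            mul_div_assoc, div_self hS.ne', mul_one]
        · simp
      have hT2 : ∑ i ∈ A, ∑ j ∈ Finset.univ \ A,
          (if k = j then x i * -(x j) / S else 0)
          = if k ∈ Finset.univ \ A then -(x k) else 0 := by
        rw [Finset.sum_comm]
        rw [Finset.sum_congr rfl (fun j _ => Finset.sum_ite_irrel _ _ _ _)]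
        simp only [Finset.sum_const_zero]
        rw [Finset.sum_ite_eq]
        split_ifs with h
        · rw [← Finset.sum_div, ← Finset.sum_mul, ← hSdef, mul_comm, mul_div_assoc,
            div_self hS.ne', mul_one]
        · rfl
      rw [hT1, hT2]
      by_cases hk : k ∈ A
      · rw [if_pos hk, if_neg (by simp [Finset.mem_sdiff, hk]), sub_zero]
      · rw [if_neg hk, if_pos (Finset.mem_sdiff.mpr ⟨Finset.mem_univ k, hk⟩), zero_sub,
          neg_neg]
    refine Set.mem_iUnion.mpr ⟨A, Set.mem_iUnion.mpr ⟨hpos, Set.mem_iUnion.mpr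
      ⟨hAsub, ?_⟩⟩⟩
    simp only [partitionCone, SetLike.mem_coe]
    rw [key]
    refine Submodule.sum_mem _ (fun i hi => Submodule.sum_mem _ (fun j hj => ?_))
    have hc : 0 ≤ x i * -(x j) / S :=
      div_nonneg (mul_nonneg (hxA i hi).le (neg_nonneg.mpr (hxB j hj))) hS.le
    have hgen := Submodule.subset_span (R := ℝ≥0)
      (s := {y : Fin (m + n) → ℝ | ∃ a ∈ A, ∃ b ∈ Finset.univ \ A,
        y = stdBasis a - stdBasis b}) ⟨i, hi, j, hj, rfl⟩
    have := Submodule.smul_mem _ (⟨_, hc⟩ : ℝ≥0) hgen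
    exact this
  · have hle : ∀ i, x i ≤ 0 := by
      intro i
      by_contra h
      exact hpos ⟨i, Finset.mem_filter.mpr ⟨Finset.mem_univ i, not_le.mp h⟩⟩
    have hx0 : x = 0 := by
      funext i
      exact (Finset.sum_eq_zero_iff_of_nonpos (fun i _ => hle i)).mp h0 i (Finset.mem_univ i)
    set z : Fin (m + n) := ⟨0, Nat.lt_of_lt_of_le hm (Nat.le_add_right m n)⟩ with hz
    refine Set.mem_iUnion.mpr ⟨{z}, Set.mem_iUnion.mpr ⟨Finset.singleton_nonempty z,
      Set.mem_iUnion.mpr ⟨?_, ?_⟩⟩⟩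
    · rw [Finset.singleton_subset_iff, Finset.mem_filter]
      exact ⟨Finset.mem_univ z, by simp [hz]; omega⟩
    · simp only [partitionCone, SetLike.mem_coe]
      rw [hx0]
      exact Submodule.zero_mem _

/-- The union of the cones `C(A, [m+n] \ A)` over all nonempty `A ⊆ [m]` equals
`L + C₀`, where `L = span {e₁ - eᵢ : 2 ≤ i ≤ m}` and
`C₀ = cone {(1/m)(e₁ + ⋯ + e_m) - eⱼ : m < j ≤ m+n}`. -/
theorem union_partition_cones_eq {m n : ℕ} (hm : 1 ≤ m) :
    (⋃ (A : Finset (Fin (m + n))) (_ : A.Nonempty)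
        (_ : A ⊆ Finset.univ.filter (fun i : Fin (m + n) => (i : ℕ) < m)),
        partitionCone A (Finset.univ \ A)) =
      (Submodule.span ℝ {x : Fin (m + n) → ℝ | ∃ i : Fin (m + n),
          (i : ℕ) < m ∧ (i : ℕ) ≠ 0 ∧
          x = stdBasis (⟨0, by omega⟩ : Fin (m + n)) - stdBasis i} :
        Set (Fin (m + n) → ℝ)) +
      (Submodule.span ℝ≥0 {x : Fin (m + n) → ℝ | ∃ j : Fin (m + n), m ≤ (j : ℕ) ∧
          x = (m : ℝ)⁻¹ •
            (∑ i ∈ Finset.univ.filter (fun i : Fin (m + n) => (i : ℕ) < m), stdBasis i)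
            - stdBasis j} :
        Set (Fin (m + n) → ℝ)) := by
  apply Set.eq_of_subset_of_subset
  · refine Set.iUnion_subset (fun A => Set.iUnion_subset (fun hne =>
      Set.iUnion_subset (fun hsub => ?_)))
    exact fun x hx => coneBound_subset_sum hm (cone_subset A hsub hx)
  · intro x hx
    rcases Set.mem_add.mp hx with ⟨u, hu, w, hw, rfl⟩
    apply coneBound_subset_union hm
    have hu' : u ∈ coneBound m n := by
      have hle : Submodule.span ℝ {x : Fin (m + n) → ℝ | ∃ i : Fin (m + n),
          (i : ℕ) < m ∧ (i : ℕ) ≠ 0 ∧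
          x = stdBasis (⟨0, by omega⟩ : Fin (m + n)) - stdBasis i} ≤ linBound m n := by
        refine Submodule.span_le.mpr ?_
        rintro y ⟨i, him, hi0, rfl⟩
        refine ⟨by simp [Finset.sum_sub_distrib, sum_stdBasis], fun j hj => ?_⟩
        have h1 : stdBasis (⟨0, by omega⟩ : Fin (m + n)) j = 0 := by
          rw [stdBasis_apply, if_neg]
          intro h
          have : (j : ℕ) = 0 := by rw [h]
          omega
        have h2 : stdBasis i j = 0 := by
          rw [stdBasis_apply, if_neg]
          intro h
          subst h
          omega
        simp [h1, h2]
      have := hle (SetLike.mem_coe.mp hu)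
      exact ⟨this.1, fun j hj => (this.2 j hj).le⟩
    have hw' : w ∈ coneBound m n := by
      have hle : Submodule.span ℝ≥0 {x : Fin (m + n) → ℝ | ∃ j : Fin (m + n), m ≤ (j : ℕ) ∧
          x = (m : ℝ)⁻¹ •
            (∑ i ∈ Finset.univ.filter (fun i : Fin (m + n) => (i : ℕ) < m), stdBasis i)
            - stdBasis j} ≤ coneBound m n := by
        refine Submodule.span_le.mpr ?_
        rintro y ⟨j, hjm, rfl⟩
        constructor
        · simp only [Pi.sub_apply, Pi.smul_apply, smul_eq_mul, sum_stdBasis_F_apply]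
          rw [Finset.sum_sub_distrib, ← Finset.mul_sum, Finset.sum_boole, sum_stdBasis]
          have hcard : ((Finset.univ.filter (fun k : Fin (m + n) => (k : ℕ) < m)).card : ℝ)
              = (m : ℝ) := by rw [filter_lt_card]
          rw [hcard, inv_mul_cancel₀ (by positivity : (m : ℝ) ≠ 0), sub_self]
        · intro k hk
          simp only [Pi.sub_apply, Pi.smul_apply, smul_eq_mul, sum_stdBasis_F_apply,
            if_neg (by omega : ¬ (k : ℕ) < m), mul_zero, zero_sub, neg_nonpos]
          rw [stdBasis_apply]
          positivity
      exact hle (SetLike.mem_coe.mp hw)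
    exact (coneBound m n).add_mem hu' hw'
end
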